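/- Let X be an L-embedded Banach space, X** = X ⊕₁ X_s. Let (z_l) be a normalized sequence in X satisfying (1 − 2^{−m}) ∑_{l≥m} |α_l| ≤ ‖∑_{l≥m} α_l z_l‖ ≤ (1 + 2^{−m}) ∑_{l≥m} |α_l| for all m and all (α_l) ∈ ℓ¹ (i.e., (z_l) spans ℓ¹ almost isometrically). Then every weak* accumulation point z_s of (z_l) in X** that lies outside X belongs to X_s and satisfies ‖z_s‖ = 1. -/

import Mathlib

open Filter Topology NormedSpace

/-- Hahn-Banach: prescribe values on a family with a norm bound. -/
lemma exists_functional_of_bound {X : Type*} [NormedAddCommGroup X] [NormedSpace ℝ X]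
    {ι : Type*} (w : ι → X) (v : ι → ℝ) (K : ℝ) (hK : 0 ≤ K)
    (h : ∀ (s : Finset ι) (b : ι → ℝ),
      |∑ i ∈ s, b i * v i| ≤ K * ‖∑ i ∈ s, b i • w i‖) :
    ∃ f : StrongDual ℝ X, ‖f‖ ≤ K ∧ ∀ i, f (w i) = v i := by
  classical
  set T : (ι →₀ ℝ) →ₗ[ℝ] X := Finsupp.linearCombination ℝ w with hT
  set Λ : (ι →₀ ℝ) →ₗ[ℝ] ℝ := Finsupp.linearCombination ℝ v with hΛ
  have hest : ∀ a : ι →₀ ℝ, |Λ a| ≤ K * ‖T a‖ := by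
    intro a
    have := h a.support a
    simpa [hT, hΛ, Finsupp.linearCombination_apply, Finsupp.sum, smul_eq_mul] using this
  have hker : LinearMap.ker T ≤ LinearMap.ker Λ := by
    intro a ha
    have h0 : T a = 0 := ha
    have := hest a
    rw [h0] at this
    simp only [norm_zero, mul_zero] at this
    exact LinearMap.mem_ker.2 (abs_nonpos_iff.mp this)
  set ψ : LinearMap.range T →ₗ[ℝ] ℝ :=
    (Submodule.liftQ (LinearMap.ker T) Λ hker).comp
      (T.quotKerEquivRange.symm : LinearMap.range T →ₗ[ℝ] (ι →₀ ℝ) ⧸ LinearMap.ker T) with hψ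
  have key : ∀ a : ι →₀ ℝ, ∀ (hm : T a ∈ LinearMap.range T), ψ ⟨T a, hm⟩ = Λ a := by
    intro a hm
    have h1 : T.quotKerEquivRange (Submodule.Quotient.mk a) = ⟨T a, hm⟩ :=
      Subtype.ext (T.quotKerEquivRange_apply_mk a)
    have h2 : T.quotKerEquivRange.symm ⟨T a, hm⟩ = Submodule.Quotient.mk a := by
      rw [← h1, LinearEquiv.symm_apply_apply]
    simp [hψ, h2]
  have hbound : ∀ y : LinearMap.range T, ‖ψ y‖ ≤ K * ‖y‖ := by
    rintro ⟨y, hy⟩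
    obtain ⟨a, rfl⟩ := hy
    rw [key a ⟨a, rfl⟩, Real.norm_eq_abs]
    exact hest a
  set f₁ : LinearMap.range T →L[ℝ] ℝ := ψ.mkContinuous K hbound with hf₁
  obtain ⟨g, hg1, hg2⟩ := exists_extension_norm_eq (LinearMap.range T) f₁
  refine ⟨g, ?_, ?_⟩
  · rw [hg2]; exact ψ.mkContinuous_norm_le hK hbound
  · intro i
    have hmem : w i ∈ LinearMap.range T := by
      refine ⟨Finsupp.single i 1, ?_⟩
      simp [hT, Finsupp.linearCombination_single]
    have h1 : g (w i) = f₁ ⟨w i, hmem⟩ := hg1 ⟨w i, hmem⟩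
    have h2 : (⟨w i, hmem⟩ : LinearMap.range T) =
        ⟨T (Finsupp.single i 1), LinearMap.mem_range_self _ _⟩ := by
      apply Subtype.ext; simp [hT, Finsupp.linearCombination_single]
    rw [h1, h2]
    show ψ _ = v i
    rw [key]
    simp [hΛ, Finsupp.linearCombination_single]

lemma option_sum {M : Type*} [AddCommMonoid M] (s : Finset (Option ℕ)) (G : Option ℕ → M) :
    ∑ o ∈ s, G o = (if none ∈ s then G none else 0) + ∑ j ∈ s.eraseNone, G (some j) := by
  classical
  have hmap : (s.eraseNone).map ⟨some, Option.some_injective ℕ⟩ = s.erase none := by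
    ext o
    cases o <;> simp [Finset.mem_eraseNone]
  have h2 : ∑ j ∈ s.eraseNone, G (some j) = ∑ o ∈ s.erase none, G o := by
    rw [← hmap, Finset.sum_map]
    rfl
  by_cases h : none ∈ s
  · rw [if_pos h, h2, Finset.add_sum_erase _ _ h]
  · rw [if_neg h, h2, Finset.erase_eq_of_notMem h, zero_add]

lemma tsum_shift {M : Type*} [AddCommGroup M] [TopologicalSpace M] [T2Space M]
    (m : ℕ) (s : Finset ℕ) (u : ℕ → M)
    (hu : ∀ l, l ∉ s.image (fun i => m + i) → u l = 0) :
    ∑' l, u l = ∑ i ∈ s, u (m + i) := by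
  rw [tsum_eq_sum (s := s.image (fun i => m + i)) hu]
  exact Finset.sum_image (fun a _ b _ h => by omega)

lemma pattern_functional {X : Type*} [NormedAddCommGroup X] [NormedSpace ℝ X]
    (z : ℕ → X)
    (hz : ∀ (m : ℕ) (α : ℕ → ℝ), (∀ l < m, α l = 0) → Summable (fun l => |α l|) →
      (1 - ((2 : ℝ) ^ m)⁻¹) * ∑' l, |α l| ≤ ‖∑' l, α l • z l‖ ∧
      ‖∑' l, α l • z l‖ ≤ (1 + ((2 : ℝ) ^ m)⁻¹) * ∑' l, |α l|)
    (m : ℕ) (hm : 1 ≤ m) (σ : ℕ → ℝ) (hσ : ∀ l, |σ l| = 1) :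
    ∃ f : StrongDual ℝ X, ‖f‖ ≤ (1 - ((2 : ℝ) ^ m)⁻¹)⁻¹ ∧ ∀ l, m ≤ l → f (z l) = σ l := by
  classical
  have hεpos : 0 < 1 - ((2 : ℝ) ^ m)⁻¹ := by
    have h1 : (1:ℝ) < 2 ^ m := one_lt_pow₀ one_lt_two (by omega)
    have := inv_lt_one_of_one_lt₀ h1
    linarith
  have hK : 0 ≤ (1 - ((2 : ℝ) ^ m)⁻¹)⁻¹ := by positivity
  have hbd : ∀ (s : Finset ℕ) (b : ℕ → ℝ),
      |∑ i ∈ s, b i * σ (m + i)| ≤ (1 - ((2 : ℝ) ^ m)⁻¹)⁻¹ * ‖∑ i ∈ s, b i • z (m + i)‖ := by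
    intro s b
    set α : ℕ → ℝ := fun l => if l ∈ s.image (fun i => m + i) then b (l - m) else 0 with hα
    have hα0 : ∀ l < m, α l = 0 := by
      intro l hl
      have : l ∉ s.image (fun i => m + i) := by
        simp only [Finset.mem_image]; rintro ⟨i, _, rfl⟩; omega
      simp only [hα]; exact if_neg this
    have hvan : ∀ l, l ∉ s.image (fun i => m + i) → α l = 0 :=
      fun l hl => by simp only [hα]; exact if_neg hl
    have hαs : Summable fun l => |α l| :=
      summable_of_ne_finset_zero (s := s.image (fun i => m + i))
        (fun l hl => by rw [hvan l hl, abs_zero])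
    have hαval : ∀ i ∈ s, α (m + i) = b i := by
      intro i hi
      have hmem : m + i ∈ s.image (fun i => m + i) := Finset.mem_image.2 ⟨i, hi, rfl⟩
      simp only [hα]; rw [if_pos hmem, Nat.add_sub_cancel_left]
    have habs : ∑' l, |α l| = ∑ i ∈ s, |b i| := by
      rw [tsum_shift m s _ (fun l hl => by rw [hvan l hl, abs_zero])]
      exact Finset.sum_congr rfl fun i hi => by rw [hαval i hi]
    have hvec : ∑' l, α l • z l = ∑ i ∈ s, b i • z (m + i) := by
      rw [tsum_shift m s _ (fun l hl => by rw [hvan l hl, zero_smul])]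
      exact Finset.sum_congr rfl fun i hi => by rw [hαval i hi]
    have hlow := (hz m α hα0 hαs).1
    rw [habs, hvec] at hlow
    have h1 : |∑ i ∈ s, b i * σ (m + i)| ≤ ∑ i ∈ s, |b i| := by
      refine (Finset.abs_sum_le_sum_abs _ _).trans (le_of_eq ?_)
      exact Finset.sum_congr rfl fun i _ => by rw [abs_mul, hσ, mul_one]
    calc |∑ i ∈ s, b i * σ (m + i)| ≤ ∑ i ∈ s, |b i| := h1
      _ = (1 - ((2 : ℝ) ^ m)⁻¹)⁻¹ * ((1 - ((2 : ℝ) ^ m)⁻¹) * ∑ i ∈ s, |b i|) :=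
          (inv_mul_cancel_left₀ hεpos.ne' _).symm
      _ ≤ (1 - ((2 : ℝ) ^ m)⁻¹)⁻¹ * ‖∑ i ∈ s, b i • z (m + i)‖ :=
          mul_le_mul_of_nonneg_left hlow hK
  obtain ⟨f, hf1, hf2⟩ := exists_functional_of_bound (fun i => z (m + i)) (fun i => σ (m + i))
    (1 - ((2 : ℝ) ^ m)⁻¹)⁻¹ hK hbd
  exact ⟨f, hf1, fun l hl => by simpa [Nat.add_sub_cancel' hl] using hf2 (l - m)⟩

set_option maxHeartbeats 1000000 in
theorem stmt11 {X : Type*} [NormedAddCommGroup X] [NormedSpace ℝ X] [CompleteSpace X]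
    (P : StrongDual ℝ (StrongDual ℝ X) →L[ℝ] StrongDual ℝ (StrongDual ℝ X))
    (hproj : ∀ F, P (P F) = P F)
    (hL : ∀ F, ‖P F‖ + ‖F - P F‖ = ‖F‖)
    (hrange : Set.range P = Set.range (inclusionInDoubleDual ℝ X))
    (z : ℕ → X) (hznorm : ∀ l, ‖z l‖ = 1)
    (hz : ∀ (m : ℕ) (α : ℕ → ℝ), (∀ l < m, α l = 0) → Summable (fun l => |α l|) →
      (1 - ((2 : ℝ) ^ m)⁻¹) * ∑' l, |α l| ≤ ‖∑' l, α l • z l‖ ∧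
      ‖∑' l, α l • z l‖ ≤ (1 + ((2 : ℝ) ^ m)⁻¹) * ∑' l, |α l|)
    (zs : StrongDual ℝ (StrongDual ℝ X))
    (hcluster : MapClusterPt (StrongDual.toWeakDual zs) atTop
      (fun l => StrongDual.toWeakDual (inclusionInDoubleDual ℝ X (z l))))
    (hout : ∀ x : X, inclusionInDoubleDual ℝ X x ≠ zs) :
    P zs = 0 ∧ ‖zs‖ = 1 := by
  classical
  -- cluster point evaluation
  have hclf : ∀ f : StrongDual ℝ X,
      MapClusterPt (zs f) atTop (fun l => f (z l)) := by
    intro f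
    have h1 := hcluster.continuousAt_comp
      (f := fun w : WeakDual ℝ (StrongDual ℝ X) => w f)
      ((WeakDual.eval_continuous f).continuousAt)
    exact h1
  have hval : ∀ (f : StrongDual ℝ X) (b : ℝ), (∀ᶠ l in atTop, f (z l) = b) → zs f = b := by
    intro f b hev
    have hcp : ClusterPt (zs f) (map (fun l => f (z l)) atTop) := (hclf f).clusterPt
    have ht : Tendsto (fun l => f (z l)) atTop (𝓝 b) :=
      tendsto_const_nhds.congr' (by filter_upwards [hev] with l h using h.symm)
    exact eq_of_nhds_neBot (hcp.neBot.mono (inf_le_inf_left _ ht))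
  -- ‖zs‖ ≤ 1
  have hnle : ‖zs‖ ≤ 1 := by
    refine ContinuousLinearMap.opNorm_le_bound zs zero_le_one ?_
    intro f
    have hcp : ClusterPt (zs f) (map (fun l => f (z l)) atTop) := (hclf f).clusterPt
    have hle : map (fun l => f (z l)) atTop ≤ 𝓟 {t : ℝ | |t| ≤ ‖f‖} := by
      refine le_principal_iff.2 ?_
      refine eventually_map.2 (Eventually.of_forall fun l => ?_)
      have := f.le_opNorm (z l)
      rw [hznorm l, mul_one] at this
      simpa using this
    have hmem : zs f ∈ closure {t : ℝ | |t| ≤ ‖f‖} :=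
      mem_closure_iff_clusterPt.2 (hcp.mono hle)
    have hcl : IsClosed {t : ℝ | |t| ≤ ‖f‖} :=
      isClosed_le continuous_abs continuous_const
    rw [hcl.closure_eq] at hmem
    rw [Real.norm_eq_abs, one_mul]
    exact hmem
  -- ‖zs‖ = 1
  have hn1 : ‖zs‖ = 1 := by
    refine le_antisymm hnle ?_
    by_contra hlt
    push_neg at hlt
    obtain ⟨n, hn⟩ := exists_pow_lt_of_lt_one (x := 1 - ‖zs‖) (y := (2:ℝ)⁻¹)
      (by linarith) (by norm_num)
    set m := max n 1 with hmdef
    have hm1 : 1 ≤ m := le_max_right _ _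
    have hmn : ((2:ℝ) ^ m)⁻¹ < 1 - ‖zs‖ := by
      have h1 : (2:ℝ) ^ n ≤ 2 ^ m := pow_le_pow_right₀ one_le_two (le_max_left _ _)
      have h2 : ((2:ℝ) ^ m)⁻¹ ≤ ((2:ℝ) ^ n)⁻¹ := by
        apply inv_anti₀ (by positivity) h1
      calc ((2:ℝ) ^ m)⁻¹ ≤ ((2:ℝ) ^ n)⁻¹ := h2
        _ = (2:ℝ)⁻¹ ^ n := by rw [inv_pow]
        _ < 1 - ‖zs‖ := hn
    obtain ⟨f, hf1, hf2⟩ := pattern_functional z hz m hm1 (fun _ => 1) (fun _ => by norm_num)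
    have hzf : zs f = 1 := hval f 1 (eventually_atTop.2 ⟨m, fun l hl => hf2 l hl⟩)
    have hb : |zs f| ≤ ‖zs‖ * ‖f‖ := by
      have := zs.le_opNorm f
      rwa [Real.norm_eq_abs] at this
    rw [hzf] at hb
    have hεpos : 0 < 1 - ((2 : ℝ) ^ m)⁻¹ := by
      have : ‖zs‖ ≥ 0 := norm_nonneg zs
      linarith
    have : ‖zs‖ * ‖f‖ < 1 := by
      have h3 : ‖zs‖ * ‖f‖ ≤ ‖zs‖ * (1 - ((2 : ℝ) ^ m)⁻¹)⁻¹ :=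
        mul_le_mul_of_nonneg_left hf1 (norm_nonneg zs)
      have h4 : ‖zs‖ * (1 - ((2 : ℝ) ^ m)⁻¹)⁻¹ < (1 - ((2 : ℝ) ^ m)⁻¹) * (1 - ((2 : ℝ) ^ m)⁻¹)⁻¹ := by
        apply mul_lt_mul_of_pos_right (by linarith) (by positivity)
      rw [mul_inv_cancel₀ hεpos.ne'] at h4
      linarith
    simp at hb
    linarith
  -- the element x
  obtain ⟨x, hx⟩ : ∃ x : X, inclusionInDoubleDual ℝ X x = P zs := by
    have : P zs ∈ Set.range (inclusionInDoubleDual ℝ X) := by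
      rw [← hrange]; exact ⟨zs, rfl⟩
    exact this
  have hiso : ∀ u : X, ‖inclusionInDoubleDual ℝ X u‖ = ‖u‖ := fun u =>
    (inclusionInDoubleDualLi ℝ (E := X)).norm_map u
  have hfix : ∀ u : X, P (inclusionInDoubleDual ℝ X u) = inclusionInDoubleDual ℝ X u := by
    intro u
    obtain ⟨G, hG⟩ : inclusionInDoubleDual ℝ X u ∈ Set.range P := by
      rw [hrange]; exact ⟨u, rfl⟩
    rw [← hG, hproj]
  set c := ‖x‖ with hcdef
  have hPn : ‖P zs‖ = c := by rw [← hx, hiso]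
  have hLzs := hL zs
  rw [hn1, hPn] at hLzs
  have hsig : ‖zs - P zs‖ = 1 - c := by linarith
  have hcle : c ≤ 1 := by
    have := norm_nonneg (zs - P zs)
    linarith
  have hc1 : c < 1 := by
    rcases lt_or_eq_of_le hcle with h | h
    · exact h
    · exfalso
      have h0 : ‖zs - P zs‖ = 0 := by rw [hsig, h]; ring
      have : zs = P zs := by
        have hd : dist zs (P zs) = 0 := by rwa [dist_eq_norm zs (P zs)]
        exact eq_of_dist_eq_zero hd
      exact hout x (hx.trans this.symm)
  have hPzs : P zs = 0 := by
    by_contra hP0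
    have hcpos : 0 < c := by
      rw [hcdef, norm_pos_iff]
      intro h0
      apply hP0
      rw [← hx, h0, map_zero]
    -- choose m with (2^m)⁻¹ < c * c
    obtain ⟨n, hn⟩ := exists_pow_lt_of_lt_one (x := c * c) (y := (2:ℝ)⁻¹)
      (by positivity) (by norm_num)
    set m := max n 1 with hmdef
    have hm1 : 1 ≤ m := le_max_right _ _
    set ε := ((2:ℝ) ^ m)⁻¹ with hεdef
    have hεpos : 0 < ε := by positivity
    have hmlt : ε < c * c := by
      have h1 : (2:ℝ) ^ n ≤ 2 ^ m := pow_le_pow_right₀ one_le_two (le_max_left _ _)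
      have h2 : ε ≤ ((2:ℝ) ^ n)⁻¹ := by
        rw [hεdef]; exact inv_anti₀ (by positivity) h1
      calc ε ≤ ((2:ℝ) ^ n)⁻¹ := h2
        _ = (2:ℝ)⁻¹ ^ n := by rw [inv_pow]
        _ < c * c := hn
    have hε1 : 0 < 1 - ε := by nlinarith
    -- the key lower estimate
    have low : ∀ (γ : ℝ) (s' : Finset ℕ) (b' : ℕ → ℝ),
        (1 - ε) * (|γ| + ∑ j ∈ s', |b' j|) - |γ| * (1 - c) ≤
          ‖γ • x + ∑ j ∈ s', b' j • z (m + j)‖ := by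
      intro γ s' b'
      set Y := ∑ j ∈ s', b' j • z (m + j) with hY
      set A := ∑ j ∈ s', |b' j| with hA
      set sgn : ℝ := if γ < 0 then -1 else 1 with hsgn
      have hsgn1 : |sgn| = 1 := by
        rw [hsgn]; split <;> norm_num
      have hγsgn : γ * sgn = |γ| := by
        rw [hsgn]; rcases lt_or_ge γ 0 with h | h
        · rw [if_pos h, abs_of_neg h]; ring
        · rw [if_neg (not_lt.2 h), abs_of_nonneg h]; ring
      set σfn : ℕ → ℝ := fun l => if l ∈ s'.image (fun j => m + j)
        then (if b' (l - m) < 0 then -1 else if 0 < b' (l - m) then 1 else sgn)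
        else sgn with hσfn
      have hσ1 : ∀ l, |σfn l| = 1 := by
        intro l
        simp only [hσfn]
        split_ifs
        · norm_num
        · norm_num
        · exact hsgn1
        · exact hsgn1
      obtain ⟨f, hfn, hfv⟩ := pattern_functional z hz m hm1 σfn hσ1
      have hev : ∀ᶠ l in atTop, f (z l) = sgn := by
        rw [eventually_atTop]
        refine ⟨m + s'.sup id + 1, fun l hl => ?_⟩
        have hlm : m ≤ l := by omega
        have hnm : l ∉ s'.image (fun j => m + j) := by
          intro hmem
          obtain ⟨j, hj, hjl⟩ := Finset.mem_image.1 hmem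
          have := Finset.le_sup (f := id) hj
          simp only [id] at this
          omega
        rw [hfv l hlm]
        simp only [hσfn]
        rw [if_neg hnm]
      have hzsf : zs f = sgn := hval f sgn hev
      have hfY : f Y = A := by
        rw [hY, map_sum, hA]
        refine Finset.sum_congr rfl fun j hj => ?_
        have hmem : m + j ∈ s'.image (fun j => m + j) := Finset.mem_image.2 ⟨j, hj, rfl⟩
        have hσval : σfn (m + j) = if b' j < 0 then -1 else if 0 < b' j then 1 else sgn := by
          simp only [hσfn]
          rw [if_pos hmem, Nat.add_sub_cancel_left]
        have hfz : f (z (m + j)) = σfn (m + j) := hfv (m + j) (by omega)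
        rw [map_smul, smul_eq_mul, hfz, hσval]
        rcases lt_trichotomy (b' j) 0 with h | h | h
        · rw [if_pos h, abs_of_neg h]; ring
        · rw [h]; simp
        · rw [if_neg (not_lt.2 h.le), if_pos h, abs_of_pos h]; ring
      have hev2 : (γ • zs + inclusionInDoubleDual ℝ X Y) f = |γ| + A := by
        rw [ContinuousLinearMap.add_apply, ContinuousLinearMap.smul_apply, smul_eq_mul,
          hzsf, dual_def, hfY, hγsgn]
      have hble : (1 - ε) * (|γ| + A) ≤ ‖γ • zs + inclusionInDoubleDual ℝ X Y‖ := by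
        have h1 : |(γ • zs + inclusionInDoubleDual ℝ X Y) f| ≤
            ‖γ • zs + inclusionInDoubleDual ℝ X Y‖ * ‖f‖ := by
          have := (γ • zs + inclusionInDoubleDual ℝ X Y).le_opNorm f
          rwa [Real.norm_eq_abs] at this
        rw [hev2, abs_of_nonneg (by positivity)] at h1
        have h2 : ‖γ • zs + inclusionInDoubleDual ℝ X Y‖ * ‖f‖ ≤
            ‖γ • zs + inclusionInDoubleDual ℝ X Y‖ * (1 - ε)⁻¹ :=
          mul_le_mul_of_nonneg_left hfn (norm_nonneg (γ • zs + inclusionInDoubleDual ℝ X Y))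
        have h3 := h1.trans h2
        have h4 := mul_le_mul_of_nonneg_left h3 hε1.le
        rw [mul_comm (‖γ • zs + inclusionInDoubleDual ℝ X Y‖) _, mul_inv_cancel_left₀ hε1.ne'] at h4
        exact h4
      have hPF : P (γ • zs + inclusionInDoubleDual ℝ X Y) =
          inclusionInDoubleDual ℝ X (γ • x + Y) := by
        rw [map_add, map_smul, hfix Y, ← hx, map_add, map_smul]
      have hLF := hL (γ • zs + inclusionInDoubleDual ℝ X Y)
      rw [hPF] at hLF
      have h3 : γ • zs + inclusionInDoubleDual ℝ X Y - inclusionInDoubleDual ℝ X (γ • x + Y) =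
          γ • (zs - P zs) := by
        rw [map_add, map_smul, ← hx, smul_sub γ zs]
        abel
      rw [h3, hiso] at hLF
      have h4 : ‖γ • (zs - P zs)‖ = |γ| * (1 - c) := by
        rw [@norm_smul _ _ _ _ _ NormedSpace.toNormSMulClass γ (zs - P zs), hsig, Real.norm_eq_abs]
      rw [h4] at hLF
      linarith [hble, hLF]
    -- build the functional g
    set K := (1 - ε / c)⁻¹ with hKdef
    have hεc : ε / c < c := (div_lt_iff₀ hcpos).2 hmlt
    have h1εc : 0 < 1 - ε / c := by linarith
    have hKpos : 0 < K := by rw [hKdef]; positivity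
    set w : Option ℕ → X := fun o => match o with
      | none => x
      | some j => z (m + j) with hw
    set v : Option ℕ → ℝ := fun o => match o with
      | none => -c
      | some _ => 1 with hv
    have hbd : ∀ (s : Finset (Option ℕ)) (b : Option ℕ → ℝ),
        |∑ i ∈ s, b i * v i| ≤ K * ‖∑ i ∈ s, b i • w i‖ := by
      intro s b
      set γ := if none ∈ s then b none else 0 with hγ
      set s' := s.eraseNone with hs'
      set b' : ℕ → ℝ := fun j => b (some j) with hb'
      have hsplit1 : ∑ i ∈ s, b i * v i = γ * (-c) + ∑ j ∈ s', b' j := by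
        rw [option_sum s (fun o => b o * v o)]
        congr 1
        · by_cases h : none ∈ s
          · rw [if_pos h, hγ, if_pos h]; try simp [hv]
          · rw [if_neg h, hγ, if_neg h]; ring
        · exact Finset.sum_congr rfl fun j _ => by simp [hv, hb']
      have hsplit2 : ∑ i ∈ s, b i • w i = γ • x + ∑ j ∈ s', b' j • z (m + j) := by
        rw [option_sum s (fun o => b o • w o)]
        congr 1
        · by_cases h : none ∈ s
          · rw [if_pos h, hγ, if_pos h]; try simp [hw]
          · rw [if_neg h, hγ, if_neg h, zero_smul]
      set A := ∑ j ∈ s', |b' j| with hA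
      have hAnn : 0 ≤ A := Finset.sum_nonneg fun j _ => abs_nonneg _
      have hlow := low γ s' b'
      have habs : |γ * (-c) + ∑ j ∈ s', b' j| ≤ |γ| * c + A := by
        refine (abs_add_le _ _).trans ?_
        have h1 : |γ * (-c)| = |γ| * c := by
          rw [abs_mul, abs_neg, abs_of_nonneg (norm_nonneg x)]
        have h2 : |∑ j ∈ s', b' j| ≤ A := Finset.abs_sum_le_sum_abs _ _
        linarith
      have hkey : (1 - ε / c) * (|γ| * c + A) ≤ ‖γ • x + ∑ j ∈ s', b' j • z (m + j)‖ := by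
        refine le_trans ?_ hlow
        have hεA : ε * A ≤ ε / c * A := by
          apply mul_le_mul_of_nonneg_right _ hAnn
          rw [le_div_iff₀ hcpos]
          nlinarith
        have hexp : (1 - ε / c) * (|γ| * c + A) = |γ| * c + A - ε * |γ| - ε / c * A := by
          field_simp
          ring
        rw [hexp]
        have hγnn : 0 ≤ |γ| := abs_nonneg _
        nlinarith
      rw [hsplit1, hsplit2]
      calc |γ * (-c) + ∑ j ∈ s', b' j| ≤ |γ| * c + A := habs
        _ = K * ((1 - ε / c) * (|γ| * c + A)) := by
            rw [hKdef, inv_mul_cancel_left₀ h1εc.ne']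
        _ ≤ K * ‖γ • x + ∑ j ∈ s', b' j • z (m + j)‖ :=
            mul_le_mul_of_nonneg_left hkey hKpos.le
    obtain ⟨g, hg1, hg2⟩ := exists_functional_of_bound w v K hKpos.le hbd
    have hgx : g x = -c := hg2 none
    have hgz : ∀ l, m ≤ l → g (z l) = 1 := by
      intro l hl
      have := hg2 (some (l - m))
      simp only [hw, hv] at this
      rwa [Nat.add_sub_cancel' hl] at this
    have hzsg : zs g = 1 := hval g 1 (eventually_atTop.2 ⟨m, hgz⟩)
    have hvv : (zs - P zs) g = 1 + c := by
      rw [ContinuousLinearMap.sub_apply, hzsg, ← hx, dual_def, hgx]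
      ring
    have hbnd : |(zs - P zs) g| ≤ ‖zs - P zs‖ * ‖g‖ := by
      have := (zs - P zs).le_opNorm g
      rwa [Real.norm_eq_abs] at this
    rw [hvv, hsig, abs_of_nonneg (by linarith)] at hbnd
    have h6 : (1 - c) * ‖g‖ ≤ (1 - c) * K :=
      mul_le_mul_of_nonneg_left hg1 (by linarith)
    have h7 : (1 - c) * K < 1 := by
      rw [hKdef, ← div_eq_mul_inv, div_lt_one h1εc]
      linarith
    linarith
  exact ⟨hPzs, hn1⟩
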